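/- Let X be a connected partial groupoid with X_1 finite. If X has dimension m with m ≥ |X_1 \ X_0| (the number of nonidentity edges), then X is a group: X_0 is a singleton and 𝓔_T : X_n → lim_T X is a bijection for every n ≥ 1 and every spine T of [n]. -/

import Mathlib

/-- A symmetric (simplicial) set: a functor `Υᵒᵖ → Set`, where `Υ` has objects
`[n] = {0,…,n}` (encoded as `Fin (n+1)`) and all functions as morphisms.
For `α : [m] → [n]` and `x ∈ X_n`, `act α x` is `x · α ∈ X_m`. -/
structure SymSet where
  obj : ℕ → Type
  act : ∀ {m n : ℕ}, (Fin (m + 1) → Fin (n + 1)) → obj n → obj m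
  act_id : ∀ {n : ℕ} (x : obj n), act id x = x
  act_comp : ∀ {m n k : ℕ} (α : Fin (m + 1) → Fin (n + 1)) (β : Fin (n + 1) → Fin (k + 1))
      (x : obj k), act α (act β x) = act (β ∘ α) x

namespace SymSet

/-- `x_{ij} ∈ X_1`, the action on `x ∈ X_n` of the map `[1] → [n]` with `0 ↦ i`, `1 ↦ j`. -/
def edge (X : SymSet) {n : ℕ} (i j : Fin (n + 1)) (x : X.obj n) : X.obj 1 :=
  X.act (fun t : Fin 2 => if t = 0 then i else j) x

/-- The domain of an edge, its image under `ι₀ : [0] → [1]`, `0 ↦ 0`. -/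
def edgeDom (X : SymSet) (f : X.obj 1) : X.obj 0 :=
  X.act (fun _ : Fin 1 => (0 : Fin 2)) f

/-- The codomain of an edge, its image under `ι₁ : [0] → [1]`, `0 ↦ 1`. -/
def edgeCod (X : SymSet) (f : X.obj 1) : X.obj 0 :=
  X.act (fun _ : Fin 1 => (1 : Fin 2)) f

/-- The identity edge `id_a` on an object `a ∈ X_0`, induced by the unique map `[1] → [0]`. -/
def identityEdge (X : SymSet) (a : X.obj 0) : X.obj 1 :=
  X.act (fun _ : Fin 2 => (0 : Fin 1)) a

/-- An edge is an identity if it is in the image of `X_0 → X_1`. -/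
def IsIdentityEdge (X : SymSet) (f : X.obj 1) : Prop :=
  ∃ a : X.obj 0, f = X.identityEdge a

/-- The tuple of edges `x_{ij}` (for `i < j` an edge `{i,j}` of the spine `T`)
associated to an `n`-simplex `x`. -/
def spineTuple (X : SymSet) {n : ℕ} (T : SimpleGraph (Fin (n + 1))) (x : X.obj n) :
    ∀ i j : Fin (n + 1), i < j → T.Adj i j → X.obj 1 :=
  fun i j _ _ => X.edge i j x

/-- Membership in `lim_T X`: the components have matching endpoints. -/
def IsSpineLim (X : SymSet) {n : ℕ} (T : SimpleGraph (Fin (n + 1)))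
    (e : ∀ i j : Fin (n + 1), i < j → T.Adj i j → X.obj 1) : Prop :=
  ∃ v : Fin (n + 1) → X.obj 0, ∀ (i j : Fin (n + 1)) (hlt : i < j) (h : T.Adj i j),
    X.edgeDom (e i j hlt h) = v i ∧ X.edgeCod (e i j hlt h) = v j

/-- The limit `lim_T X` of the diagram associated to a spine `T`. -/
def SpineLim (X : SymSet) {n : ℕ} (T : SimpleGraph (Fin (n + 1))) : Type :=
  { e : ∀ i j : Fin (n + 1), i < j → T.Adj i j → X.obj 1 // X.IsSpineLim T e }

lemma spineTuple_isSpineLim (X : SymSet) {n : ℕ} (T : SimpleGraph (Fin (n + 1)))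
    (x : X.obj n) : X.IsSpineLim T (X.spineTuple T x) := by
  refine ⟨fun i => X.act (fun _ : Fin 1 => i) x, fun i j hlt h => ⟨?_, ?_⟩⟩
  · show X.act _ (X.act _ x) = _
    rw [X.act_comp]
    show X.act ((fun t : Fin 2 => if t = 0 then i else j) ∘ fun _ : Fin 1 => 0) x
      = X.act (fun _ : Fin 1 => i) x
    congr 1
  · show X.act _ (X.act _ x) = _
    rw [X.act_comp]
    show X.act ((fun t : Fin 2 => if t = 0 then i else j) ∘ fun _ : Fin 1 => 1) x
      = X.act (fun _ : Fin 1 => j) x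
    congr 1

/-- The map `𝓔_T : X_n → lim_T X`. -/
def spineMap (X : SymSet) {n : ℕ} (T : SimpleGraph (Fin (n + 1))) (x : X.obj n) :
    X.SpineLim T :=
  ⟨X.spineTuple T x, X.spineTuple_isSpineLim T x⟩

/-- A symmetric set is *spiny* if `𝓔_T` is injective for every `n ≥ 1` and
every spine `T` of `[n]` (a tree with vertex set `[n]`). -/
def Spiny (X : SymSet) : Prop :=
  ∀ n : ℕ, 1 ≤ n → ∀ T : SimpleGraph (Fin (n + 1)), T.IsTree →
    Function.Injective (X.spineMap T)

/-- An element `x ∈ X_n` is degenerate if `x = y · σ` for some noninvertible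
surjection `σ : [n] → [k]`. -/
def Degenerate (X : SymSet) {n : ℕ} (x : X.obj n) : Prop :=
  ∃ (k : ℕ) (σ : Fin (n + 1) → Fin (k + 1)) (y : X.obj k),
    Function.Surjective σ ∧ ¬ Function.Bijective σ ∧ x = X.act σ y

/-- A symmetric subset (subfunctor) of `X`. -/
structure SymSubset (X : SymSet) where
  carrier : ∀ n : ℕ, Set (X.obj n)
  act_mem : ∀ {m n : ℕ} (α : Fin (m + 1) → Fin (n + 1)) {x : X.obj n},
    x ∈ carrier n → X.act α x ∈ carrier m

/-- `X` is `n`-skeletal: the smallest symmetric subset of `X` containing all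
of its `n`-simplices is all of `X`. -/
def IsSkeletal (X : SymSet) (n : ℕ) : Prop :=
  ∀ Y : SymSubset X, (∀ x : X.obj n, x ∈ Y.carrier n) →
    ∀ (m : ℕ) (x : X.obj m), x ∈ Y.carrier m

/-- `X` has dimension `n`: it is `n`-skeletal but not `k`-skeletal for `k < n`
(for `n ≥ 1` this is equivalent to not being `(n-1)`-skeletal). -/
def HasDim (X : SymSet) (n : ℕ) : Prop :=
  X.IsSkeletal n ∧ ∀ k : ℕ, k < n → ¬ X.IsSkeletal k

/-- Two objects are related if there is an edge between them (in either direction). -/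
def EdgeRel (X : SymSet) (a b : X.obj 0) : Prop :=
  ∃ f : X.obj 1, (X.edgeDom f = a ∧ X.edgeCod f = b) ∨ (X.edgeDom f = b ∧ X.edgeCod f = a)

/-- `X` is connected: it is nonempty and any two objects are joined by a
zig-zag of edges. -/
def Connected (X : SymSet) : Prop :=
  Nonempty (X.obj 0) ∧ ∀ a b : X.obj 0, Relation.ReflTransGen X.EdgeRel a b

/-- `n_a`: the number of nonidentity edges with domain `a`. -/
noncomputable def nEdges (X : SymSet) (a : X.obj 0) : ℕ :=
  Nat.card { f : X.obj 1 // X.edgeDom f = a ∧ ¬ X.IsIdentityEdge f }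

/-- `p(X)`: the maximum of the `n_a` over all objects `a`. -/
noncomputable def pVal (X : SymSet) : ℕ := ⨆ a : X.obj 0, X.nEdges a

/-- A map of symmetric sets (a natural transformation). -/
structure SymMap (X Y : SymSet) where
  app : ∀ n : ℕ, X.obj n → Y.obj n
  naturality : ∀ {m n : ℕ} (α : Fin (m + 1) → Fin (n + 1)) (x : X.obj n),
    app m (X.act α x) = Y.act α (app n x)

/-- A map of symmetric sets is an isomorphism iff it is levelwise bijective. -/
def SymMap.IsIso {X Y : SymSet} (F : SymMap X Y) : Prop :=
  ∀ n : ℕ, Function.Bijective (F.app n)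

/-- `X` and `Y` are isomorphic symmetric sets. -/
def Isomorphic (X Y : SymSet) : Prop := ∃ F : SymMap X Y, F.IsIso

/-- The Bousfield–Segal map `𝓑_m : X_m → X_1^m`, `x ↦ (x_{01}, x_{02}, …, x_{0m})`. -/
def bousfield (X : SymSet) {m : ℕ} (x : X.obj m) : Fin m → X.obj 1 :=
  fun i => X.edge 0 i.succ x

/-- `X` is spiny in degrees below `q`: `𝓔_T` is injective for every spine `T`
of `[n]` for each `1 ≤ n ≤ q`. -/
def SpinyBelow (X : SymSet) (q : ℕ) : Prop :=
  ∀ n : ℕ, 1 ≤ n → n ≤ q → ∀ T : SimpleGraph (Fin (n + 1)), T.IsTree →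
    Function.Injective (X.spineMap T)

/-- `X` is a groupoid: `𝓔_T : X_n → lim_T X` is a bijection for every `n ≥ 1`
and every spine `T` of `[n]`. -/
def IsGroupoid (X : SymSet) : Prop :=
  ∀ n : ℕ, 1 ≤ n → ∀ T : SimpleGraph (Fin (n + 1)), T.IsTree →
    Function.Bijective (X.spineMap T)

/-- `X` is reduced: `X_0` is a singleton. -/
def Reduced (X : SymSet) : Prop := Nonempty (X.obj 0) ∧ Subsingleton (X.obj 0)

/-- A partial group is a reduced spiny symmetric set. -/
def IsPartialGroup (X : SymSet) : Prop := X.Reduced ∧ X.Spiny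

/-- The levelwise product of two symmetric sets. -/
def prod (X Y : SymSet) : SymSet where
  obj n := X.obj n × Y.obj n
  act α p := (X.act α p.1, Y.act α p.2)
  act_id p := by cases p with | mk a b => simp only [X.act_id, Y.act_id]
  act_comp α β p := by cases p with | mk a b => simp only [X.act_comp, Y.act_comp]

end SymSet
namespace SymSet

variable {X : SymSet}

/-- The vertex `x_i` of a simplex. -/
def vert {n : ℕ} (i : Fin (n + 1)) (x : X.obj n) : X.obj 0 :=
  X.act (fun _ : Fin 1 => i) x

lemma edge_act {m n : ℕ} (α : Fin (m + 1) → Fin (n + 1)) (x : X.obj n)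
    (i j : Fin (m + 1)) : X.edge i j (X.act α x) = X.edge (α i) (α j) x := by
  unfold edge
  rw [X.act_comp]
  congr 1
  funext t
  by_cases h : t = 0 <;> simp [h, Function.comp]

lemma vert_act {m n : ℕ} (α : Fin (m + 1) → Fin (n + 1)) (x : X.obj n)
    (i : Fin (m + 1)) : vert i (X.act α x) = vert (α i) x := by
  unfold vert
  rw [X.act_comp]
  rfl

lemma edgeDom_edge {n : ℕ} (i j : Fin (n + 1)) (x : X.obj n) :
    X.edgeDom (X.edge i j x) = vert i x := by
  unfold edgeDom edge vert
  rw [X.act_comp]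
  congr 1

lemma edgeCod_edge {n : ℕ} (i j : Fin (n + 1)) (x : X.obj n) :
    X.edgeCod (X.edge i j x) = vert j x := by
  unfold edgeCod edge vert
  rw [X.act_comp]
  congr 1

lemma edge_self {n : ℕ} (i : Fin (n + 1)) (x : X.obj n) :
    X.edge i i x = X.identityEdge (vert i x) := by
  unfold edge identityEdge vert
  rw [X.act_comp]
  congr 1
  funext t
  by_cases h : t = 0 <;> simp [h, Function.comp]

lemma edgeDom_identityEdge (b : X.obj 0) : X.edgeDom (X.identityEdge b) = b := by
  unfold edgeDom identityEdge
  rw [X.act_comp]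
  have : ((fun _ : Fin 2 => (0 : Fin 1)) ∘ fun _ : Fin 1 => (0 : Fin 2)) = id := by
    funext t; simp [Function.comp]; exact Subsingleton.elim _ _
  rw [this, X.act_id]

lemma edgeCod_identityEdge (b : X.obj 0) : X.edgeCod (X.identityEdge b) = b := by
  unfold edgeCod identityEdge
  rw [X.act_comp]
  have : ((fun _ : Fin 2 => (0 : Fin 1)) ∘ fun _ : Fin 1 => (1 : Fin 2)) = id := by
    funext t; simp [Function.comp]; exact Subsingleton.elim _ _
  rw [this, X.act_id]

/-- Edge reversal. -/
def rev (f : X.obj 1) : X.obj 1 := X.edge 1 0 f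

lemma edge_zero_one (f : X.obj 1) : X.edge 0 1 f = f := by
  unfold edge
  have : (fun t : Fin 2 => if t = 0 then (0 : Fin 2) else 1) = id := by
    funext t; fin_cases t <;> simp
  rw [this, X.act_id]

lemma rev_edge {n : ℕ} (i j : Fin (n + 1)) (x : X.obj n) :
    rev (X.edge i j x) = X.edge j i x := by
  have := edge_act (X := X) (fun t : Fin 2 => if t = 0 then i else j) x 1 0
  simpa [rev, edge] using this

lemma rev_rev (f : X.obj 1) : rev (rev f) = f := by
  unfold rev
  have := rev_edge (X := X) 1 0 f
  unfold rev at this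
  rw [this]
  simpa using edge_zero_one f

lemma rev_identityEdge (b : X.obj 0) : rev (X.identityEdge b) = X.identityEdge b := by
  unfold rev edge identityEdge
  rw [X.act_comp]
  congr 1

lemma edgeDom_rev (f : X.obj 1) : X.edgeDom (rev f) = X.edgeCod f := by
  unfold rev
  rw [edgeDom_edge]
  unfold vert edgeCod
  rfl

lemma edgeCod_rev (f : X.obj 1) : X.edgeCod (rev f) = X.edgeDom f := by
  unfold rev
  rw [edgeCod_edge]
  unfold vert edgeDom
  rfl

lemma not_isIdentityEdge_rev {f : X.obj 1} (h : ¬ X.IsIdentityEdge f) :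
    ¬ X.IsIdentityEdge (rev f) := by
  intro ⟨b, hb⟩
  exact h ⟨b, by rw [← rev_rev f, hb, rev_identityEdge]⟩

lemma identityEdge_injective : Function.Injective X.identityEdge := by
  intro b c h
  have := congrArg X.edgeDom h
  rwa [edgeDom_identityEdge, edgeDom_identityEdge] at this

end SymSet
namespace SymSet

open SimpleGraph Walk in
/-- The star graph on `Fin (n+1)` with center `c`. -/
def starG {n : ℕ} (c : Fin (n + 1)) : SimpleGraph (Fin (n + 1)) where
  Adj u v := u ≠ v ∧ (u = c ∨ v = c)
  symm := by
    refine ⟨fun u v ⟨h1, h2⟩ => ?_⟩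
    exact ⟨h1.symm, h2.symm⟩
  loopless := by refine ⟨fun u ⟨h1, _⟩ => ?_⟩; exact h1 rfl

lemma starG_adj {n : ℕ} (c u v : Fin (n + 1)) :
    (starG c).Adj u v ↔ u ≠ v ∧ (u = c ∨ v = c) := Iff.rfl

lemma starG_connected {n : ℕ} (c : Fin (n + 1)) : (starG c).Connected := by
  rw [SimpleGraph.connected_iff]
  refine ⟨fun u v => ?_, ⟨c⟩⟩
  by_cases huv : u = v
  · exact huv ▸ SimpleGraph.Reachable.refl u
  by_cases hu : u = c
  · exact (show (starG c).Adj u v from ⟨huv, Or.inl hu⟩).reachable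
  by_cases hv : v = c
  · exact (show (starG c).Adj u v from ⟨huv, Or.inr hv⟩).reachable
  · exact ((show (starG c).Adj u c from ⟨hu, Or.inr rfl⟩).reachable).trans
      ((show (starG c).Adj c v from ⟨fun h => hv h.symm, Or.inl rfl⟩).reachable)

lemma starG_isTree {n : ℕ} (c : Fin (n + 1)) : (starG c).IsTree := by
  refine ⟨starG_connected c, ?_⟩
  intro v p hp
  have h3 := hp.three_le_length
  cases p with
  | nil => simp at h3
  | @cons _ w1 _ h1 q =>
    cases q with
    | nil => simp at h3
    | @cons _ w2 _ h2 q2 =>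
      have hpath : (SimpleGraph.Walk.cons h2 q2).IsPath :=
        ((SimpleGraph.Walk.cons_isCycle_iff _ _).mp hp).1
      by_cases hv : v = c
      · have hw1 : w1 ≠ c := fun h => h1.1 (by rw [hv, h])
        have hw2 : w2 = c := by
          rcases h2.2 with h | h
          · exact absurd h hw1
          · exact h
        cases q2 with
        | nil =>
          simp [SimpleGraph.Walk.length_cons, SimpleGraph.Walk.length_nil] at h3
        | @cons _ w4 _ h4 q4 =>
          rw [SimpleGraph.Walk.cons_isPath_iff] at hpath
          have h5 := hpath.1
          rw [SimpleGraph.Walk.cons_isPath_iff] at h5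
          have : w2 ∈ q4.support := by
            rw [show w2 = v from hw2.trans hv.symm]
            exact SimpleGraph.Walk.end_mem_support q4
          exact absurd this h5.2
      · have hw1 : w1 = c := by
          rcases h1.2 with h | h
          · exact absurd h hv
          · exact h
        have hw2 : w2 ≠ c := fun h => h2.1 (by rw [hw1, h])
        cases q2 with
        | nil =>
          simp [SimpleGraph.Walk.length_cons, SimpleGraph.Walk.length_nil] at h3
        | @cons _ w4 _ h4 q4 =>
          have hw4 : w4 = c := by
            rcases h4.2 with h | h
            · exact absurd h hw2
            · exact h
          rw [SimpleGraph.Walk.cons_isPath_iff] at hpath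
          have : w1 ∈ (SimpleGraph.Walk.cons h4 q4).support := by
            rw [SimpleGraph.Walk.support_cons]
            refine List.mem_cons_of_mem _ ?_
            rw [show w1 = w4 from hw1.trans hw4.symm]
            exact SimpleGraph.Walk.start_mem_support q4
          exact absurd this hpath.2

end SymSet
namespace SymSet

variable {X : SymSet}

/-- Spininess applied componentwise. -/
lemma spine_eq (hX : X.Spiny) {n : ℕ} (hn : 1 ≤ n) (T : SimpleGraph (Fin (n + 1)))
    (hT : T.IsTree) {x y : X.obj n}
    (h : ∀ (i j : Fin (n + 1)), i < j → T.Adj i j → X.edge i j x = X.edge i j y) :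
    x = y := by
  apply hX n hn T hT
  apply Subtype.ext
  funext i j hlt hadj
  exact h i j hlt hadj

/-- Two 2-simplices with the same `01` and `02` edges agree. -/
lemma eq_of_star0 (hX : X.Spiny) {z z' : X.obj 2}
    (h1 : X.edge 0 1 z = X.edge 0 1 z') (h2 : X.edge 0 2 z = X.edge 0 2 z') : z = z' := by
  apply spine_eq hX (by norm_num) (starG 0) (starG_isTree 0)
  intro i j hlt hadj
  rcases hadj.2 with h | h
  · subst h
    have h0 : 0 < (j : ℕ) := Fin.lt_def.mp hlt
    have h3 : (j : ℕ) < 3 := j.isLt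
    have hv : j = 1 ∨ j = 2 := by
      rcases (by omega : (j : ℕ) = 1 ∨ (j : ℕ) = 2) with h' | h'
      · exact Or.inl (Fin.ext (by simp [h']))
      · exact Or.inr (Fin.ext (by simp [h']))
    rcases hv with h' | h' <;> subst h' <;> assumption
  · subst h
    have h0 : (i : ℕ) < 0 := Fin.lt_def.mp hlt
    omega

/-- Two 2-simplices with the same `02` and `12` edges agree. -/
lemma eq_of_star2 (hX : X.Spiny) {z z' : X.obj 2}
    (h1 : X.edge 0 2 z = X.edge 0 2 z') (h2 : X.edge 1 2 z = X.edge 1 2 z') : z = z' := by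
  apply spine_eq hX (by norm_num) (starG 2) (starG_isTree 2)
  intro i j hlt hadj
  rcases hadj.2 with h | h
  · subst h
    have h0 : 2 < (j : ℕ) := by simpa [Fin.lt_def] using hlt
    have h3 : (j : ℕ) < 3 := j.isLt
    omega
  · subst h
    have h0 : (i : ℕ) < 2 := by simpa [Fin.lt_def] using hlt
    have hv : i = 0 ∨ i = 1 := by
      rcases (by omega : (i : ℕ) = 0 ∨ (i : ℕ) = 1) with h' | h'
      · exact Or.inl (Fin.ext (by simp [h']))
      · exact Or.inr (Fin.ext (by simp [h']))
    rcases hv with h' | h' <;> subst h' <;> assumption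

/-- Star-surjectivity: every tuple of edges arises as the `0i` edges of a simplex. -/
def StarSurj (X : SymSet) : Prop :=
  ∀ (n : ℕ) (f : Fin n → X.obj 1), ∃ y : X.obj n, ∀ i : Fin n, X.edge 0 i.succ y = f i

section DivMul

variable (st : X.StarSurj)

/-- The 2-simplex with `01`-edge `f` and `02`-edge `g`. -/
noncomputable def z2 (f g : X.obj 1) : X.obj 2 :=
  (st 2 ![f, g]).choose

lemma z2_edge01 (f g : X.obj 1) : X.edge 0 1 (z2 st f g) = f := by
  have := (st 2 ![f, g]).choose_spec 0
  simpa [z2] using this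

lemma z2_edge02 (f g : X.obj 1) : X.edge 0 2 (z2 st f g) = g := by
  have := (st 2 ![f, g]).choose_spec 1
  simpa [z2] using this

/-- Division: the `12`-edge of the 2-simplex with `01`-edge `f`, `02`-edge `g`. -/
noncomputable def dvd2 (f g : X.obj 1) : X.obj 1 := X.edge 1 2 (z2 st f g)

lemma dvd2_unique (hX : X.Spiny) {f g : X.obj 1} {z : X.obj 2}
    (h1 : X.edge 0 1 z = f) (h2 : X.edge 0 2 z = g) : X.edge 1 2 z = dvd2 st f g := by
  have : z = z2 st f g :=
    eq_of_star0 hX (by rw [h1, z2_edge01]) (by rw [h2, z2_edge02])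
  rw [this, dvd2]

/-- Coherence: in any simplex, `dvd2` of two edges from a common vertex gives the third edge. -/
lemma coh (hX : X.Spiny) {n : ℕ} (y : X.obj n) (i j k : Fin (n + 1)) :
    X.edge j k y = dvd2 st (X.edge i j y) (X.edge i k y) := by
  set w : X.obj 2 := X.act ![i, j, k] y with hw
  have e01 : X.edge 0 1 w = X.edge i j y := by rw [hw, edge_act]; simp
  have e02 : X.edge 0 2 w = X.edge i k y := by rw [hw, edge_act]; simp
  have e12 : X.edge 1 2 w = X.edge j k y := by rw [hw, edge_act]; simp
  rw [← e12]
  exact dvd2_unique st hX e01 e02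

lemma dvd2_swap (hX : X.Spiny) (f g : X.obj 1) :
    dvd2 st g f = rev (dvd2 st f g) := by
  have h1 := coh st hX (z2 st f g) 0 2 1
  rw [z2_edge01, z2_edge02] at h1
  rw [← h1, ← rev_edge]
  rfl

/-- Multiplication. -/
noncomputable def mul2 (f t : X.obj 1) : X.obj 1 := dvd2 st (rev f) t

lemma dvd2_mul2 (hX : X.Spiny) (f t : X.obj 1) : dvd2 st f (mul2 st f t) = t := by
  have h1 := coh st hX (z2 st (rev f) t) 1 0 2
  rw [z2_edge02] at h1
  have h2 : X.edge 1 0 (z2 st (rev f) t) = f := by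
    rw [← rev_edge, z2_edge01, rev_rev]
  rw [h2] at h1
  exact h1.symm

lemma dvd2_left_inj (hX : X.Spiny) {f f' g : X.obj 1}
    (h : dvd2 st f g = dvd2 st f' g) : f = f' := by
  have : z2 st f g = z2 st f' g := by
    apply eq_of_star2 hX
    · rw [z2_edge02, z2_edge02]
    · exact h
  calc f = X.edge 0 1 (z2 st f g) := (z2_edge01 st f g).symm
    _ = X.edge 0 1 (z2 st f' g) := by rw [this]
    _ = f' := z2_edge01 st f' g

lemma mul2_cancel (hX : X.Spiny) (x u : X.obj 1) :
    mul2 st (mul2 st x u) (rev u) = x := by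
  set M := mul2 st (mul2 st x u) (rev u) with hM
  have l1 : dvd2 st (mul2 st x u) M = rev u := dvd2_mul2 st hX _ _
  have l2 : dvd2 st M (mul2 st x u) = u := by
    rw [dvd2_swap st hX, l1, rev_rev]
  have l3 : dvd2 st x (mul2 st x u) = u := dvd2_mul2 st hX _ _
  exact dvd2_left_inj st hX (l2.trans l3.symm)

lemma mul2_cancel' (hX : X.Spiny) (x u : X.obj 1) :
    mul2 st (mul2 st x (rev u)) u = x := by
  have := mul2_cancel st hX x (rev u)
  rwa [rev_rev] at this

end DivMul

end SymSet
namespace SymSet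

variable {X : SymSet}

/-- Left fold of `mul` along a walk. -/
noncomputable def wprod (mul : X.obj 1 → X.obj 1 → X.obj 1) {n : ℕ}
    {T : SimpleGraph (Fin (n + 1))} (g : ∀ i j : Fin (n + 1), T.Adj i j → X.obj 1) :
    ∀ {u v : Fin (n + 1)}, T.Walk u v → X.obj 1 → X.obj 1
  | _, _, SimpleGraph.Walk.nil, c => c
  | _, _, SimpleGraph.Walk.cons h w, c => wprod mul g w (mul c (g _ _ h))

lemma wprod_concat (mul : X.obj 1 → X.obj 1 → X.obj 1) {n : ℕ}
    {T : SimpleGraph (Fin (n + 1))} (g : ∀ i j : Fin (n + 1), T.Adj i j → X.obj 1)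
    {u v w : Fin (n + 1)} (p : T.Walk u v) (h : T.Adj v w) (c : X.obj 1) :
    wprod mul g (p.concat h) c = mul (wprod mul g p c) (g v w h) := by
  induction p generalizing c with
  | nil => rw [SimpleGraph.Walk.concat_nil]; rfl
  | @cons a b d h' p ih =>
    rw [SimpleGraph.Walk.concat_cons]
    show wprod mul g (p.concat h) (mul c (g _ _ h')) = _
    rw [ih]
    rfl

section Tree

variable (st : X.StarSurj) {n : ℕ} {T : SimpleGraph (Fin (n + 1))} (hT : T.IsTree)
  (g : ∀ i j : Fin (n + 1), T.Adj i j → X.obj 1)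

/-- The unique path between two vertices of a tree. -/
noncomputable def pathTo (u v : Fin (n + 1)) : T.Walk u v :=
  (hT.existsUnique_path u v).choose

lemma pathTo_isPath (u v : Fin (n + 1)) : (pathTo hT u v).IsPath :=
  (hT.existsUnique_path u v).choose_spec.1

lemma pathTo_unique {u v : Fin (n + 1)} (p : T.Walk u v) (hp : p.IsPath) :
    p = pathTo hT u v :=
  (hT.existsUnique_path u v).choose_spec.2 p hp

lemma pathTo_self (u : Fin (n + 1)) : pathTo hT u u = SimpleGraph.Walk.nil :=
  (pathTo_unique hT _ SimpleGraph.Walk.IsPath.nil).symm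

/-- The potential attached to each vertex. -/
noncomputable def pot (c : X.obj 1) (v : Fin (n + 1)) : X.obj 1 :=
  wprod (mul2 st) g (pathTo hT 0 v) c

lemma pot_adj (hX : X.Spiny)
    (hg : ∀ i j (h : T.Adj i j), g j i h.symm = rev (g i j h))
    (c : X.obj 1) {i j : Fin (n + 1)} (h : T.Adj i j) :
    pot st hT g c j = mul2 st (pot st hT g c i) (g i j h) := by
  classical
  have hp : (pathTo hT 0 i).IsPath := pathTo_isPath hT 0 i
  by_cases hj : j ∈ (pathTo hT 0 i).support
  · -- the path to i extends the path to j by the edge j→i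
    have htake : ((pathTo hT 0 i).takeUntil j hj).IsPath := hp.takeUntil hj
    have hdrop : ((pathTo hT 0 i).dropUntil j hj).IsPath := hp.dropUntil hj
    have hsingle : (SimpleGraph.Walk.cons h.symm SimpleGraph.Walk.nil : T.Walk j i).IsPath := by
      rw [SimpleGraph.Walk.cons_isPath_iff]
      exact ⟨SimpleGraph.Walk.IsPath.nil, by simp [h.ne']⟩
    have hdu : (pathTo hT 0 i).dropUntil j hj
        = SimpleGraph.Walk.cons h.symm SimpleGraph.Walk.nil := by
      rw [pathTo_unique hT _ hdrop, pathTo_unique hT _ hsingle]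
    have htu : (pathTo hT 0 i).takeUntil j hj = pathTo hT 0 j := pathTo_unique hT _ htake
    have hspec := (pathTo hT 0 i).take_spec hj
    rw [hdu, htu] at hspec
    have hspec2 : pathTo hT 0 i = (pathTo hT 0 j).concat h.symm := by
      rw [SimpleGraph.Walk.concat_eq_append]
      exact hspec.symm
    have hi : pot st hT g c i = mul2 st (pot st hT g c j) (g j i h.symm) := by
      unfold pot
      rw [hspec2, wprod_concat]
    rw [hi, hg i j h]
    exact (mul2_cancel' st hX _ _).symm
  · have hconcat : ((pathTo hT 0 i).concat h).IsPath := by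
      rw [← SimpleGraph.Walk.isPath_reverse_iff, SimpleGraph.Walk.reverse_concat,
        SimpleGraph.Walk.cons_isPath_iff]
      refine ⟨(SimpleGraph.Walk.isPath_reverse_iff _).mpr hp, ?_⟩
      rwa [SimpleGraph.Walk.support_reverse, List.mem_reverse]
    have heq : (pathTo hT 0 i).concat h = pathTo hT 0 j := pathTo_unique hT _ hconcat
    unfold pot
    rw [← heq, wprod_concat]

end Tree

end SymSet
namespace SymSet

variable {X : SymSet}

lemma isGroupoid_of (hX : X.Spiny) (st : X.StarSurj) (a : X.obj 0)
    (hsub : ∀ b : X.obj 0, b = a) : X.IsGroupoid := by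
  intro n hn T hT
  refine ⟨hX n hn T hT, ?_⟩
  rintro ⟨e, he⟩
  -- symmetrized edge labels
  set g : ∀ i j : Fin (n + 1), T.Adj i j → X.obj 1 := fun i j hadj =>
    if hlt : i < j then e i j hlt hadj
    else rev (e j i ((hadj.ne.lt_or_gt).resolve_left hlt) hadj.symm) with hgdef
  have hg : ∀ i j (h : T.Adj i j), g j i h.symm = rev (g i j h) := by
    intro i j h
    rcases lt_trichotomy i j with hlt | heq | hlt
    · rw [hgdef]
      simp only
      rw [dif_pos hlt, dif_neg (not_lt.mpr hlt.le)]
    · exact absurd heq h.ne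
    · rw [hgdef]
      simp only
      rw [dif_pos hlt, dif_neg (not_lt.mpr hlt.le), rev_rev]
  have hglt : ∀ i j (hlt : i < j) (h : T.Adj i j), g i j h = e i j hlt h := by
    intro i j hlt h
    rw [hgdef]
    simp only
    rw [dif_pos hlt]
  obtain ⟨y, hy⟩ := st n (fun i => pot st hT g (X.identityEdge a) i.succ)
  have hy0 : ∀ k : Fin (n + 1), X.edge 0 k y = pot st hT g (X.identityEdge a) k := by
    intro k
    induction k using Fin.cases with
    | zero =>
      rw [edge_self]
      unfold pot
      rw [pathTo_self hT]
      rw [hsub (vert 0 y)]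
      rfl
    | succ i => exact hy i
  refine ⟨y, ?_⟩
  apply Subtype.ext
  funext i j hlt hadj
  show X.edge i j y = e i j hlt hadj
  rw [coh st hX y 0 i j, hy0 i, hy0 j, pot_adj st hT g hX hg _ hadj,
    dvd2_mul2 st hX, hglt i j hlt hadj]

end SymSet
namespace SymSet

variable {X : SymSet}

lemma act_obj0 (α : Fin 1 → Fin 1) (x : X.obj 0) : X.act α x = x := by
  have : α = id := funext fun t => Subsingleton.elim _ _
  rw [this, X.act_id]

/-- A symmetric set of dimension `k+1` has a nondegenerate `(k+1)`-simplex. -/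
lemma exists_nondegenerate {k : ℕ} (hdim : X.HasDim (k + 1)) :
    ∃ x : X.obj (k + 1), ¬ X.Degenerate x := by
  by_contra h
  push_neg at h
  apply hdim.2 k (Nat.lt_succ_self k)
  intro Y hY
  have hstep : ∀ x : X.obj (k + 1), x ∈ Y.carrier (k + 1) := by
    intro x
    obtain ⟨k', σ, y, hsurj, hnbij, heq⟩ := h x
    have hk1 : k' + 1 ≤ k + 2 := by
      simpa using Fintype.card_le_of_surjective σ hsurj
    have hk2 : k' ≤ k := by
      rcases Nat.lt_or_ge k' (k + 1) with h' | h'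
      · omega
      · exfalso
        have hkk : k' = k + 1 := by omega
        subst hkk
        exact hnbij ((Fintype.bijective_iff_surjective_and_card σ).mpr ⟨hsurj, rfl⟩)
    have hy : y ∈ Y.carrier k' := by
      have hrs : y = X.act (fun u : Fin (k' + 1) => (⟨u, by omega⟩ : Fin (k + 1)))
          (X.act (fun t : Fin (k + 1) => (⟨min t k', by omega⟩ : Fin (k' + 1))) y) := by
        rw [X.act_comp]
        have : ((fun t : Fin (k + 1) => (⟨min t k', by omega⟩ : Fin (k' + 1))) ∘
            (fun u : Fin (k' + 1) => (⟨u, by omega⟩ : Fin (k + 1)))) = id := by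
          funext u
          apply Fin.ext
          simp
          omega
        rw [this, X.act_id]
      rw [hrs]
      exact Y.act_mem _ (hY _)
    rw [heq]
    exact Y.act_mem σ hy
  exact hdim.1 Y hstep

/-- Collapse lemma: if `x_{0j} = x_{0r}` with `j ≠ 0`, `j ≠ r`, then `x` is degenerate. -/
lemma degenerate_of_edge_eq (hX : X.Spiny) {k : ℕ} (x : X.obj (k + 1)) (j r : Fin (k + 2))
    (hj0 : j ≠ 0) (hjr : j ≠ r) (hedge : X.edge 0 j x = X.edge 0 r x) : X.Degenerate x := by
  classical
  set β : Fin (k + 2) → Fin (k + 2) := fun t => if t = j then r else t with hβ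
  have hfix : X.act β x = x := by
    apply spine_eq hX (Nat.succ_le_succ (Nat.zero_le k)) (starG 0) (starG_isTree 0)
    intro s t hlt hadj
    rcases hadj.2 with hs | ht
    · subst hs
      rw [edge_act]
      have hb0 : β 0 = 0 := by simp [hβ, Ne.symm hj0]
      rw [hb0]
      by_cases htj : t = j
      · subst htj
        simp only [hβ, if_pos rfl]
        exact hedge.symm
      · simp [hβ, htj]
    · subst ht
      exact absurd hlt (by simp)
  have hne : ∀ t, β t ≠ j := by
    intro t
    by_cases h : t = j
    · simp [hβ, h, Ne.symm hjr]
    · simp [hβ, h]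
  choose σ hσ using fun t => Fin.exists_succAbove_eq (hne t)
  refine ⟨k, σ, X.act j.succAbove x, ?_, ?_, ?_⟩
  · intro u
    refine ⟨j.succAbove u, ?_⟩
    have hb : β (j.succAbove u) = j.succAbove u := by
      simp [hβ, Fin.succAbove_ne j u]
    have h2 : j.succAbove (σ (j.succAbove u)) = j.succAbove u := by rw [hσ, hb]
    exact Fin.succAbove_right_injective h2
  · intro hbij
    have := Fintype.card_of_bijective hbij
    simp at this
  · rw [X.act_comp]
    have : (j.succAbove ∘ σ) = β := funext hσ
    rw [this, hfix]

end SymSet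
open SymSet

/-- a connected finite partial groupoid whose dimension `m` satisfies
`m ≥ |X_1 \ X_0|` is a group. -/
theorem stmt14 (X : SymSet) (hX : X.Spiny) (hconn : X.Connected)
    (hfin : Finite (X.obj 1)) (m : ℕ) (hdim : X.HasDim m)
    (hm : Nat.card { f : X.obj 1 // ¬ X.IsIdentityEdge f } ≤ m) :
    X.Reduced ∧ X.IsGroupoid := by
  classical
  obtain ⟨⟨a⟩, hzz⟩ := hconn
  haveI hfinsub : Finite { f : X.obj 1 // ¬ X.IsIdentityEdge f } := Subtype.finite
  cases m with
  | zero =>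
    have hempty : IsEmpty { f : X.obj 1 // ¬ X.IsIdentityEdge f } := by
      rcases Nat.card_eq_zero.mp (Nat.le_zero.mp hm) with h | h
      · exact h
      · exact absurd h (not_infinite_iff_finite.mpr hfinsub)
    have hall : ∀ f : X.obj 1, X.IsIdentityEdge f := by
      intro f
      by_contra h
      exact hempty.false ⟨f, h⟩
    have hstep : ∀ c d : X.obj 0, X.EdgeRel c d → c = d := by
      rintro c d ⟨f, hf⟩
      obtain ⟨b, rfl⟩ := hall f
      rcases hf with ⟨h1, h2⟩ | ⟨h1, h2⟩ <;>
        rw [← h1, ← h2, edgeDom_identityEdge, edgeCod_identityEdge]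
    have hsub : ∀ b : X.obj 0, b = a := by
      intro b
      induction hzz a b with
      | refl => rfl
      | tail hab hrel ih => exact (hstep _ _ hrel).symm.trans ih
    have hst : X.StarSurj := by
      intro n f
      refine ⟨X.act (fun _ : Fin (n + 1) => (0 : Fin 1)) a, fun i => ?_⟩
      rw [edge_act]
      obtain ⟨b, hb⟩ := hall (f i)
      rw [hb, hsub b, edge_self]
      congr 1
      exact act_obj0 _ a
    exact ⟨⟨⟨a⟩, ⟨fun b c => (hsub b).trans (hsub c).symm⟩⟩, isGroupoid_of hX hst a hsub⟩
  | succ k =>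
    obtain ⟨x, hnd⟩ := exists_nondegenerate hdim
    have hnid : ∀ i : Fin (k + 1), ¬ X.IsIdentityEdge (X.edge 0 i.succ x) := by
      rintro i ⟨b, hb⟩
      apply hnd
      apply degenerate_of_edge_eq hX x i.succ 0 (Fin.succ_ne_zero i) (Fin.succ_ne_zero i)
      rw [hb, edge_self]
      congr 1
      have := congrArg X.edgeDom hb
      rw [edgeDom_edge, edgeDom_identityEdge] at this
      exact this.symm
    set φ : Fin (k + 1) → { f : X.obj 1 // ¬ X.IsIdentityEdge f } :=
      fun i => ⟨X.edge 0 i.succ x, hnid i⟩ with hφ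
    have hinj : Function.Injective φ := by
      intro i i' h
      by_contra hne
      apply hnd
      have hsne : i.succ ≠ i'.succ := fun hh => hne (Fin.succ_injective _ hh)
      exact degenerate_of_edge_eq hX x i.succ i'.succ (Fin.succ_ne_zero i) hsne
        (congrArg Subtype.val h)
    haveI := Fintype.ofFinite { f : X.obj 1 // ¬ X.IsIdentityEdge f }
    have hbij : Function.Bijective φ := by
      refine (Fintype.bijective_iff_injective_and_card φ).mpr ⟨hinj, ?_⟩
      have h1 : k + 1 ≤ Fintype.card { f : X.obj 1 // ¬ X.IsIdentityEdge f } := by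
        simpa using Fintype.card_le_of_injective φ hinj
      have h2 : Fintype.card { f : X.obj 1 // ¬ X.IsIdentityEdge f } ≤ k + 1 := by
        rw [← Nat.card_eq_fintype_card]
        exact hm
      simp
      omega
    have hdomnid : ∀ f : X.obj 1, ¬ X.IsIdentityEdge f → X.edgeDom f = vert 0 x := by
      intro f hf
      obtain ⟨i, hi⟩ := hbij.2 ⟨f, hf⟩
      have hi' : X.edge 0 i.succ x = f := congrArg Subtype.val hi
      rw [← hi', edgeDom_edge]
    have hcodnid : ∀ f : X.obj 1, ¬ X.IsIdentityEdge f → X.edgeCod f = vert 0 x := by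
      intro f hf
      rw [← edgeDom_rev]
      exact hdomnid (rev f) (not_isIdentityEdge_rev hf)
    have hstep : ∀ c d : X.obj 0, X.EdgeRel c d → c = d ∨ (c = vert 0 x ∧ d = vert 0 x) := by
      rintro c d ⟨f, hf⟩
      by_cases hid : X.IsIdentityEdge f
      · left
        obtain ⟨b, rfl⟩ := hid
        rcases hf with ⟨h1, h2⟩ | ⟨h1, h2⟩ <;>
          rw [← h1, ← h2, edgeDom_identityEdge, edgeCod_identityEdge]
      · right
        rcases hf with ⟨h1, h2⟩ | ⟨h1, h2⟩
        · exact ⟨h1 ▸ hdomnid f hid, h2 ▸ hcodnid f hid⟩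
        · exact ⟨h2 ▸ hcodnid f hid, h1 ▸ hdomnid f hid⟩
    have hsub : ∀ b : X.obj 0, b = vert 0 x := by
      intro b
      induction hzz (vert 0 x) b with
      | refl => rfl
      | tail hab hrel ih =>
        rcases hstep _ _ hrel with h | h
        · exact h.symm.trans ih
        · exact h.2
    have hst : X.StarSurj := by
      intro n f
      set α : Fin (n + 1) → Fin (k + 2) := Fin.cases 0
        (fun i => if hid : X.IsIdentityEdge (f i) then 0
          else ((hbij.2 ⟨f i, hid⟩).choose).succ) with hα
      refine ⟨X.act α x, fun i => ?_⟩
      rw [edge_act]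
      have hα0 : α 0 = 0 := by rw [hα]; simp
      rw [hα0]
      by_cases hid : X.IsIdentityEdge (f i)
      · have hαs : α i.succ = 0 := by rw [hα]; simp [hid]
        rw [hαs, edge_self]
        obtain ⟨b, hb⟩ := hid
        rw [hb]
        congr 1
        exact (hsub b).symm
      · have hαs : α i.succ = ((hbij.2 ⟨f i, hid⟩).choose).succ := by
          rw [hα]; simp [hid]
        rw [hαs]
        exact congrArg Subtype.val ((hbij.2 ⟨f i, hid⟩).choose_spec)
    exact ⟨⟨⟨vert 0 x⟩, ⟨fun b c => (hsub b).trans (hsub c).symm⟩⟩,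
      isGroupoid_of hX hst (vert 0 x) hsub⟩
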